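/- Let U ⊆ O be open, let f : ℂ × ℂ → ℂ be holomorphic on U, let m, n ∈ ℕ, let α, β ∈ ℂ with α·β ≠ 1, and let γ ∈ ℂ ∖ {0}. Define T(z,w) := (γ·(α+z)/(1+β·z), (β+w)/(γ·(1+α·w))). Let (z,w) ∈ ℂ × ℂ with z·w ≠ 1, 1 + β·z ≠ 0, 1 + α·w ≠ 0 and T(z,w) ∈ U. Then D^{m,n}(f ∘ T)(z,w) = (γ·(1+α·w)/(1+β·z))^{m−n} · (D^{m,n} f)(T(z,w)), where the exponent m − n is taken in ℤ. -/

import Mathlib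

/-- The domain `O = {(z,w) ∈ ℂ² : z·w ≠ 1}`. -/
def Oset : Set (ℂ × ℂ) := {p | p.1 * p.2 ≠ 1}

/-- The Peschl–Minda derivative of order `(m,n)` of `f` at `(z,w)`. -/
noncomputable def PM (m n : ℕ) (f : ℂ × ℂ → ℂ) (z w : ℂ) : ℂ :=
  iteratedDeriv n (fun v => iteratedDeriv m
    (fun u => f ((z + u) / (1 + w * u), (w + v) / (1 + z * v))) 0) 0

lemma deriv_comp_const_mul' (c : ℂ) (hc : c ≠ 0) (f : ℂ → ℂ) (x : ℂ) :
    deriv (fun y => f (c * y)) x = c * deriv f (c * x) := by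
  by_cases h : DifferentiableAt ℂ f (c * x)
  · have h' : HasDerivAt (fun y => c * y) (c * 1) x := (hasDerivAt_id x).const_mul c
    have := (h.hasDerivAt.comp x h').deriv
    simp only [Function.comp_def] at this
    rw [this]; ring
  · have h2 : ¬ DifferentiableAt ℂ (fun y => f (c * y)) x := by
      intro hg
      have hinner : DifferentiableAt ℂ (fun s : ℂ => c⁻¹ * s) (c * x) :=
        differentiableAt_id.const_mul c⁻¹
      have hg' : DifferentiableAt ℂ (fun y => f (c * y)) (c⁻¹ * (c * x)) := by
        rw [inv_mul_cancel_left₀ hc]; exact hg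
      have := hg'.comp (c * x) hinner
      exact h (by simpa [Function.comp_def, mul_inv_cancel_left₀ hc] using this)
    rw [deriv_zero_of_not_differentiableAt h, deriv_zero_of_not_differentiableAt h2, mul_zero]

lemma iteratedDeriv_const_mul' (c : ℂ) (f : ℂ → ℂ) (n : ℕ) (x : ℂ) :
    iteratedDeriv n (fun y => c * f y) x = c * iteratedDeriv n f x := by
  induction n generalizing f x with
  | zero => simp [iteratedDeriv_zero]
  | succ n ih =>
    rw [iteratedDeriv_succ', iteratedDeriv_succ']
    rw [show deriv (fun y => c * f y) = fun y => c * deriv f y from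
      funext fun y => deriv_const_mul_field c]
    exact ih _ _

lemma iteratedDeriv_comp_const_mul' (c : ℂ) (hc : c ≠ 0) (f : ℂ → ℂ) (n : ℕ) (x : ℂ) :
    iteratedDeriv n (fun y => f (c * y)) x = c ^ n * iteratedDeriv n f (c * x) := by
  induction n generalizing f x with
  | zero => simp [iteratedDeriv_zero]
  | succ n ih =>
    rw [iteratedDeriv_succ', iteratedDeriv_succ']
    rw [show deriv (fun y => f (c * y)) = fun y => c * deriv f (c * y) from
      funext fun y => deriv_comp_const_mul' c hc f y]
    rw [iteratedDeriv_const_mul', ih (deriv f) x]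
    ring

lemma stmt5_key (α β γ z w u v : ℂ) (hγ : γ ≠ 0)
    (h1 : 1 + β * z ≠ 0) (h2 : 1 + α * w ≠ 0)
    (hu1 : 1 + w * u ≠ 0) (hu2 : (1 + β * z) + (β + w) * u ≠ 0)
    (hv1 : 1 + z * v ≠ 0) (hv2 : (1 + α * w) + (α + z) * v ≠ 0) :
    ((γ * (α + ((z + u) / (1 + w * u))) / (1 + β * ((z + u) / (1 + w * u))),
      (β + ((w + v) / (1 + z * v))) / (γ * (1 + α * ((w + v) / (1 + z * v))))) : ℂ × ℂ)
    = ((γ * (α + z) / (1 + β * z) + (γ * (1 + α * w) / (1 + β * z)) * u) /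
        (1 + ((β + w) / (γ * (1 + α * w))) * ((γ * (1 + α * w) / (1 + β * z)) * u)),
       ((β + w) / (γ * (1 + α * w)) + v / (γ * (1 + α * w) / (1 + β * z))) /
        (1 + (γ * (α + z) / (1 + β * z)) * (v / (γ * (1 + α * w) / (1 + β * z))))) := by
  have hu1' : 1 + u * w ≠ 0 := by rwa [mul_comm]
  have hv1' : 1 + v * z ≠ 0 := by rwa [mul_comm]
  have h1' : 1 + z * β ≠ 0 := by rwa [mul_comm]
  have h2' : 1 + w * α ≠ 0 := by rwa [mul_comm]
  have hA : (1 + β * ((z + u) / (1 + w * u))) = ((1 + β * z) + (β + w) * u) / (1 + w * u) := by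
    field_simp; ring
  have hB : (1 + α * ((w + v) / (1 + z * v))) = ((1 + α * w) + (α + z) * v) / (1 + z * v) := by
    field_simp; ring
  have hC : (1 + ((β + w) / (γ * (1 + α * w))) * ((γ * (1 + α * w) / (1 + β * z)) * u))
      = ((1 + β * z) + (β + w) * u) / (1 + β * z) := by
    field_simp
  have hD : (1 + (γ * (α + z) / (1 + β * z)) * (v / (γ * (1 + α * w) / (1 + β * z))))
      = ((1 + α * w) + (α + z) * v) / (1 + α * w) := by
    field_simp
  refine Prod.ext ?_ ?_ <;> simp only
  · rw [hA, hC, div_eq_div_iff (div_ne_zero hu2 hu1) (div_ne_zero hu2 h1)]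
    field_simp
    ring
  · rw [hB, hD]
    rw [div_eq_div_iff (mul_ne_zero hγ (div_ne_zero hv2 hv1)) (div_ne_zero hv2 h2)]
    field_simp
    ring

lemma stmt5_scale (f : ℂ × ℂ → ℂ) (m n : ℕ) (Z W lam : ℂ) (hlam : lam ≠ 0) :
    iteratedDeriv n (fun v => iteratedDeriv m
      (fun u => f ((Z + lam * u) / (1 + W * (lam * u)),
        (W + v / lam) / (1 + Z * (v / lam)))) 0) 0
    = lam ^ ((m : ℤ) - (n : ℤ)) * PM m n f Z W := by
  have e1 : (fun v => iteratedDeriv m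
      (fun u => f ((Z + lam * u) / (1 + W * (lam * u)),
        (W + v / lam) / (1 + Z * (v / lam)))) 0)
      = fun v => lam ^ m * iteratedDeriv m
        (fun u => f ((Z + u) / (1 + W * u), (W + v / lam) / (1 + Z * (v / lam)))) 0 := by
    funext v
    simpa using iteratedDeriv_comp_const_mul' lam hlam
      (fun t => f ((Z + t) / (1 + W * t), (W + v / lam) / (1 + Z * (v / lam)))) m 0
  rw [e1, iteratedDeriv_const_mul']
  have e2 : (fun v => iteratedDeriv m
      (fun u => f ((Z + u) / (1 + W * u), (W + v / lam) / (1 + Z * (v / lam)))) 0)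
      = fun v => iteratedDeriv m
        (fun u => f ((Z + u) / (1 + W * u), (W + lam⁻¹ * v) / (1 + Z * (lam⁻¹ * v)))) 0 := by
    funext v
    rw [show v / lam = lam⁻¹ * v from div_eq_inv_mul v lam]
  have e4 := iteratedDeriv_comp_const_mul' lam⁻¹ (inv_ne_zero hlam)
    (fun s => iteratedDeriv m (fun u => f ((Z + u) / (1 + W * u), (W + s) / (1 + Z * s))) 0) n 0
  rw [e2, e4]
  have e3 : iteratedDeriv n (fun s => iteratedDeriv m
      (fun u => f ((Z + u) / (1 + W * u), (W + s) / (1 + Z * s))) 0) (lam⁻¹ * 0)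
      = PM m n f Z W := by
    rw [mul_zero]; rfl
  rw [e3, zpow_sub₀ hlam, zpow_natCast, zpow_natCast, div_eq_mul_inv, inv_pow]
  ring

/-- Möbius invariance of the Peschl–Minda derivatives,
`D^{m,n}(f ∘ T)(z,w) = (γ(1+αw)/(1+βz))^{m−n} · (D^{m,n} f)(T(z,w))`
for the Möbius-type map `T = ρ_γ ∘ Φ_{α,β}`. -/
theorem stmt5 (U : Set (ℂ × ℂ)) (hU : IsOpen U) (hUO : U ⊆ Oset)
    (f : ℂ × ℂ → ℂ) (hf : DifferentiableOn ℂ f U) (m n : ℕ)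
    (α β : ℂ) (hαβ : α * β ≠ 1) (γ : ℂ) (hγ : γ ≠ 0)
    (T : ℂ × ℂ → ℂ × ℂ)
    (hT : T = fun p => (γ * (α + p.1) / (1 + β * p.1), (β + p.2) / (γ * (1 + α * p.2))))
    (z w : ℂ) (hzw : z * w ≠ 1)
    (h1 : 1 + β * z ≠ 0) (h2 : 1 + α * w ≠ 0) (hTU : T (z, w) ∈ U) :
    PM m n (f ∘ T) z w
      = (γ * (1 + α * w) / (1 + β * z)) ^ ((m : ℤ) - (n : ℤ))
          * PM m n f (T (z, w)).1 (T (z, w)).2 := by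
  subst hT
  have hlam : γ * (1 + α * w) / (1 + β * z) ≠ 0 := div_ne_zero (mul_ne_zero hγ h2) h1
  have hfst : ((fun p : ℂ × ℂ => (γ * (α + p.1) / (1 + β * p.1),
      (β + p.2) / (γ * (1 + α * p.2)))) (z, w)).1 = γ * (α + z) / (1 + β * z) := rfl
  have hsnd : ((fun p : ℂ × ℂ => (γ * (α + p.1) / (1 + β * p.1),
      (β + p.2) / (γ * (1 + α * p.2)))) (z, w)).2 = (β + w) / (γ * (1 + α * w)) := rfl
  rw [hfst, hsnd]
  have hnu : ∀ᶠ u in nhds (0 : ℂ), 1 + w * u ≠ 0 ∧ (1 + β * z) + (β + w) * u ≠ 0 := by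
    have c1 : ContinuousAt (fun u : ℂ => 1 + w * u) 0 := by fun_prop
    have c2 : ContinuousAt (fun u : ℂ => (1 + β * z) + (β + w) * u) 0 := by fun_prop
    filter_upwards [c1.eventually_ne (y := 0) (by norm_num),
      c2.eventually_ne (y := 0) (by simpa using h1)] with u a b
    exact ⟨a, b⟩
  have hnv : ∀ᶠ v in nhds (0 : ℂ), 1 + z * v ≠ 0 ∧ (1 + α * w) + (α + z) * v ≠ 0 := by
    have c1 : ContinuousAt (fun v : ℂ => 1 + z * v) 0 := by fun_prop
    have c2 : ContinuousAt (fun v : ℂ => (1 + α * w) + (α + z) * v) 0 := by fun_prop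
    filter_upwards [c1.eventually_ne (y := 0) (by norm_num),
      c2.eventually_ne (y := 0) (by simpa using h2)] with v a b
    exact ⟨a, b⟩
  have step1 : PM m n (f ∘ fun p : ℂ × ℂ => (γ * (α + p.1) / (1 + β * p.1),
      (β + p.2) / (γ * (1 + α * p.2)))) z w
      = iteratedDeriv n (fun v => iteratedDeriv m
        (fun u => f ((γ * (α + z) / (1 + β * z) + (γ * (1 + α * w) / (1 + β * z)) * u) /
            (1 + ((β + w) / (γ * (1 + α * w))) * ((γ * (1 + α * w) / (1 + β * z)) * u)),
          ((β + w) / (γ * (1 + α * w)) + v / (γ * (1 + α * w) / (1 + β * z))) /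
            (1 + (γ * (α + z) / (1 + β * z)) * (v / (γ * (1 + α * w) / (1 + β * z)))))) 0) 0 := by
    unfold PM
    apply Filter.EventuallyEq.iteratedDeriv_eq
    filter_upwards [hnv] with v hv
    apply Filter.EventuallyEq.iteratedDeriv_eq
    filter_upwards [hnu] with u hu
    exact congrArg f (stmt5_key α β γ z w u v hγ h1 h2 hu.1 hu.2 hv.1 hv.2)
  rw [step1, stmt5_scale f m n _ _ _ hlam]
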